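/- Let e_min ≤ e_max be integers and let a ≥ 0 be a real number, and let ã = MLA(a) be the multi-power logarithmic approximation of a with exponent range {e_min, …, e_max}. Then ã is exactly the sum of distinct powers of two with exponents in the range: ã = Σ_{e ∈ S} 2^e, where S is the set of integers e with e_min ≤ e ≤ e_max such that ⌊ã / 2^e⌋ is odd. -/

import Mathlib

/-- The multi-power logarithmic approximation of a real number `a ≥ 0`
with exponent range `{emin, …, emax}`. -/
noncomputable def MLA (emin emax : ℤ) (a : ℝ) : ℝ :=
  if a < (2:ℝ)^emin then 0
  else if a < (2:ℝ)^(emax+1) then (⌊a / (2:ℝ)^emin⌋ : ℝ) * (2:ℝ)^emin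
  else (2:ℝ)^(emax+1) - (2:ℝ)^emin

lemma natsum (n m : ℕ) : ∑ i ∈ Finset.range m, (n / 2^i % 2) * 2^i = n % 2^m := by
  induction m with
  | zero => simp [Nat.mod_one]
  | succ m ih =>
    rw [Finset.sum_range_succ, ih, pow_succ, Nat.mod_mul]; ring

lemma floor_nat_div (n d : ℕ) : ⌊(n:ℝ)/(d:ℝ)⌋ = (n/d : ℕ) := by
  have h1 := Rat.floor_cast (α := ℝ) ((n:ℚ)/(d:ℚ))
  rw [Rat.floor_natCast_div_natCast] at h1
  have h2 : ((n:ℝ)/(d:ℝ)) = (((n:ℚ)/(d:ℚ) : ℚ) : ℝ) := by push_cast; ring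
  rw [h2, h1]
  exact (Int.natCast_ediv _ _).symm

lemma key (emin emax : ℤ) (h : emin ≤ emax) (n : ℕ)
    (hn : n < 2^((emax + 1 - emin).toNat)) :
    (n:ℝ) * (2:ℝ)^emin =
      ∑ e ∈ (Finset.Icc emin emax).filter
        (fun e => Odd ⌊(n:ℝ) * (2:ℝ)^emin / (2:ℝ)^e⌋), (2:ℝ)^e := by
  set M := (emax + 1 - emin).toNat with hM
  have himg : Finset.Icc emin emax = (Finset.range M).image (fun i : ℕ => emin + (i:ℤ)) := by
    ext e
    simp only [Finset.mem_Icc, Finset.mem_image, Finset.mem_range]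
    constructor
    · intro ⟨h1, h2⟩; exact ⟨(e - emin).toNat, by omega, by omega⟩
    · rintro ⟨i, hi, rfl⟩; omega
  have hfloor : ∀ i : ℕ, ⌊(n:ℝ) * (2:ℝ)^emin / (2:ℝ)^(emin + (i:ℤ))⌋ = ((n / 2^i : ℕ) : ℤ) := by
    intro i
    have h2 : (2:ℝ)^(emin + (i:ℤ)) = (2:ℝ)^emin * (2:ℝ)^(i:ℤ) := by
      rw [zpow_add₀ (by norm_num)]
    have hpos : (0:ℝ) < (2:ℝ)^emin := zpow_pos (by norm_num) _
    have : (n:ℝ) * (2:ℝ)^emin / (2:ℝ)^(emin + (i:ℤ)) = (n:ℝ) / ((2^i : ℕ) : ℝ) := by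
      rw [h2]; push_cast; rw [zpow_natCast]; field_simp
    rw [this, floor_nat_div]
  rw [Finset.sum_filter, himg, Finset.sum_image (by intro a _ b _ hab; simp only at hab; omega)]
  have : ∀ i ∈ Finset.range M,
      (if Odd ⌊(n:ℝ) * (2:ℝ)^emin / (2:ℝ)^(emin + (i:ℤ))⌋ then (2:ℝ)^(emin + (i:ℤ)) else 0)
      = (2:ℝ)^emin * (((n / 2^i % 2) * 2^i : ℕ) : ℝ) := by
    intro i _
    simp only [hfloor i, Int.odd_coe_nat, Nat.odd_iff]
    by_cases hodd : n / 2^i % 2 = 1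
    · simp only [hodd, if_pos rfl]
      rw [zpow_add₀ (by norm_num : (2:ℝ) ≠ 0)]
      push_cast
      rw [zpow_natCast]; ring
    · simp [hodd, Nat.mod_two_ne_one.mp hodd]
  rw [Finset.sum_congr rfl this, ← Finset.mul_sum, ← Nat.cast_sum, natsum,
    Nat.mod_eq_of_lt hn]
  ring

theorem MLA_eq_sum_of_distinct_powers
    (emin emax : ℤ) (h : emin ≤ emax) (a : ℝ) (ha : 0 ≤ a) :
    MLA emin emax a =
      ∑ e ∈ (Finset.Icc emin emax).filter
        (fun e => Odd ⌊MLA emin emax a / (2:ℝ)^e⌋), (2:ℝ)^e := by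
  have h2pos : ∀ k : ℤ, (0:ℝ) < (2:ℝ)^k := fun k => zpow_pos (by norm_num) k
  set M := (emax + 1 - emin).toNat with hM
  have hMeq : (2:ℝ)^(emax+1) = ((2^M : ℕ) : ℝ) * (2:ℝ)^emin := by
    push_cast
    rw [← zpow_natCast (2:ℝ) M, ← zpow_add₀ (by norm_num : (2:ℝ) ≠ 0)]
    congr 1
    omega
  unfold MLA
  split_ifs with h1 h2
  · simp [Int.odd_iff]
  · -- middle case
    push_neg at h1
    have hz0 : 0 ≤ ⌊a / (2:ℝ)^emin⌋ := by
      positivity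
    set n : ℕ := ⌊a / (2:ℝ)^emin⌋.toNat with hn
    have hcast : ((⌊a / (2:ℝ)^emin⌋ : ℤ) : ℝ) = (n : ℝ) := by
      exact_mod_cast (Int.toNat_of_nonneg hz0).symm
    have hnlt : n < 2^M := by
      have hlt : a / (2:ℝ)^emin < ((2^M : ℕ) : ℝ) := by
        rw [div_lt_iff₀ (h2pos emin), ← hMeq]
        exact h2
      have := Int.floor_lt.mpr (by exact_mod_cast hlt)
      omega
    rw [hcast]
    exact key emin emax h n hnlt
  · -- saturation case
    push_neg at h1 h2
    have hMpos : 1 ≤ 2^M := Nat.one_le_two_pow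
    have hval : (2:ℝ)^(emax+1) - (2:ℝ)^emin = ((2^M - 1 : ℕ) : ℝ) * (2:ℝ)^emin := by
      rw [hMeq, Nat.cast_sub hMpos]
      push_cast
      ring
    rw [hval]
    exact key emin emax h (2^M - 1) (Nat.sub_lt (by positivity) one_pos)
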